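/- Let p be an odd positive integer. Then among any three orthogonal linear maps f₁, f₂, f₃ ∈ O(p) (orthogonal maps from R^p to R^p), there exist two indices i ≠ j such that f_i − f_j is not injective. Consequently, in R^(p,p) with p odd one cannot find three pairwise transversal maximal totally isotropic subspaces. -/

import Mathlib

open Module

noncomputable section

open Matrix

lemma aux_fix {p : ℕ} (hp : Odd p) (G C : Matrix (Fin p) (Fin p) ℝ)
    (hG : G.det ≠ 0) (hC : Cᵀ * G * C = G) (hdet : C.det = 1) :
    (C - 1).det = 0 := by
  have hCdet : C.det ≠ 0 := by rw [hdet]; norm_num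
  have hCinv : IsUnit C.det := by rw [hdet]; exact isUnit_one
  have hGinv : IsUnit G.det := isUnit_iff_ne_zero.mpr hG
  have hCt : Cᵀ = G * C⁻¹ * G⁻¹ := by
    have h1 : Cᵀ * G = G * C⁻¹ := by
      calc Cᵀ * G = Cᵀ * G * (C * C⁻¹) := by rw [mul_nonsing_inv C hCinv, mul_one]
        _ = (Cᵀ * G * C) * C⁻¹ := by noncomm_ring
        _ = G * C⁻¹ := by rw [hC]
    calc Cᵀ = Cᵀ * (G * G⁻¹) := by rw [mul_nonsing_inv G hGinv, mul_one]
      _ = (Cᵀ * G) * G⁻¹ := by rw [mul_assoc]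
      _ = G * C⁻¹ * G⁻¹ := by rw [h1]
  have key : (C - 1).det = -(C - 1).det := by
    calc (C - 1).det = (C - 1)ᵀ.det := (det_transpose _).symm
      _ = (G * (C⁻¹ - 1) * G⁻¹).det := by
          congr 1
          rw [transpose_sub, hCt, transpose_one]
          rw [mul_sub, sub_mul, mul_one]
          rw [mul_nonsing_inv G hGinv]
      _ = G.det * (C⁻¹ - 1).det * G⁻¹.det := by rw [det_mul, det_mul]
      _ = (C⁻¹ - 1).det * (G.det * G⁻¹.det) := by ring
      _ = (C⁻¹ - 1).det := by rw [det_nonsing_inv, Ring.inverse_eq_inv', mul_inv_cancel₀ hG, mul_one]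
      _ = (C⁻¹ * (1 - C)).det := by rw [mul_sub, mul_one, nonsing_inv_mul C hCinv]
      _ = C⁻¹.det * (1 - C).det := det_mul _ _
      _ = (1 - C).det := by rw [det_nonsing_inv, Ring.inverse_eq_inv', hdet, inv_one, one_mul]
      _ = (-(C - 1)).det := by rw [neg_sub]
      _ = (-1 : ℝ) ^ p * (C - 1).det := by rw [det_neg, Fintype.card_fin]
      _ = -(C - 1).det := by rw [hp.neg_one_pow, neg_one_mul]
  linarith

lemma aux_pair {p : ℕ} (hp : Odd p) (G H A B : Matrix (Fin p) (Fin p) ℝ)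
    (hG : G.det ≠ 0)
    (hA : Aᵀ * H * A = G) (hB : Bᵀ * H * B = G) (hAB : (A - B).det ≠ 0) :
    A.det = -B.det := by
  have hGA : G.det = A.det ^ 2 * H.det := by
    rw [← hA, det_mul, det_mul, det_transpose]; ring
  have hGB : G.det = B.det ^ 2 * H.det := by
    rw [← hB, det_mul, det_mul, det_transpose]; ring
  have hAd : A.det ≠ 0 := fun h => hG (by rw [hGA, h]; ring)
  have hBd : B.det ≠ 0 := fun h => hG (by rw [hGB, h]; ring)
  have hBu : IsUnit B.det := isUnit_iff_ne_zero.mpr hBd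
  obtain ⟨C, hCdef⟩ : ∃ C, C = B⁻¹ * A := ⟨_, rfl⟩
  have hBiH : (B⁻¹)ᵀ * G * B⁻¹ = H := by
    rw [← hB]
    rw [transpose_nonsing_inv]
    calc (Bᵀ)⁻¹ * (Bᵀ * H * B) * B⁻¹
        = (Bᵀ)⁻¹ * Bᵀ * H * (B * B⁻¹) := by noncomm_ring
      _ = H := by
          rw [nonsing_inv_mul _ (by simpa [det_transpose] using hBu),
            mul_nonsing_inv _ hBu, one_mul, mul_one]
  have hCG : Cᵀ * G * C = G := by
    rw [hCdef, transpose_mul]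
    calc Aᵀ * (B⁻¹)ᵀ * G * (B⁻¹ * A) = Aᵀ * ((B⁻¹)ᵀ * G * B⁻¹) * A := by noncomm_ring
      _ = G := by rw [hBiH, hA]
  have hCsq : C.det ^ 2 = 1 := by
    have h2 : C.det ^ 2 * G.det = 1 * G.det := by
      conv_rhs => rw [one_mul, ← hCG]
      rw [det_mul, det_mul, det_transpose]; ring
    exact mul_right_cancel₀ hG h2
  have hCsub : (C - 1).det ≠ 0 := by
    have : C - 1 = B⁻¹ * (A - B) := by
      rw [mul_sub, nonsing_inv_mul _ hBu, hCdef]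
    rw [this, det_mul, det_nonsing_inv, Ring.inverse_eq_inv']
    exact mul_ne_zero (inv_ne_zero hBd) hAB
  have hfac : (C.det - 1) * (C.det + 1) = 0 := by nlinarith [hCsq]
  have hCd : C.det = -1 := by
    rcases mul_eq_zero.mp hfac with h | h
    · exact absurd (aux_fix hp G C hG hCG (by linarith)) hCsub
    · linarith
  have : B.det⁻¹ * A.det = -1 := by
    rw [← Ring.inverse_eq_inv', ← det_nonsing_inv, ← det_mul, ← hCdef, hCd]
  field_simp at this
  linarith

lemma aux_trio {p : ℕ} (hp : Odd p) (G H : Matrix (Fin p) (Fin p) ℝ)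
    (A : Fin 3 → Matrix (Fin p) (Fin p) ℝ) (hG : G.det ≠ 0)
    (hA : ∀ i, (A i)ᵀ * H * (A i) = G) :
    ∃ i j : Fin 3, i ≠ j ∧ (A i - A j).det = 0 := by
  by_contra hcon
  push_neg at hcon
  have h01 := aux_pair hp G H (A 0) (A 1) hG (hA 0) (hA 1) (hcon 0 1 (by decide))
  have h02 := aux_pair hp G H (A 0) (A 2) hG (hA 0) (hA 2) (hcon 0 2 (by decide))
  have h12 := aux_pair hp G H (A 1) (A 2) hG (hA 1) (hA 2) (hcon 1 2 (by decide))
  have hd2 : (A 2).det ≠ 0 := by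
    intro h
    apply hG
    rw [← hA 2, det_mul, det_mul, det_transpose, h]
    ring
  apply hd2
  linarith

lemma bridge {M N : Type*} [AddCommGroup M] [Module ℝ M] [AddCommGroup N] [Module ℝ N]
    {p : ℕ} (hp : Odd p) (bM : Basis (Fin p) ℝ M) (bN : Basis (Fin p) ℝ N)
    (BM : M →ₗ[ℝ] M →ₗ[ℝ] ℝ) (BN : N →ₗ[ℝ] N →ₗ[ℝ] ℝ)
    (hBM : ∀ x : M, (∀ y, BM x y = 0) → x = 0)
    (g : Fin 3 → (M →ₗ[ℝ] N))
    (hg : ∀ i x y, BN (g i x) (g i y) = BM x y) :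
    ∃ i j : Fin 3, i ≠ j ∧ ∃ x : M, x ≠ 0 ∧ g i x = g j x := by
  set G := LinearMap.toMatrix₂ bM bM BM with hGdef
  set H := LinearMap.toMatrix₂ bN bN BN with hHdef
  set A : Fin 3 → Matrix (Fin p) (Fin p) ℝ := fun i => LinearMap.toMatrix bM bN (g i) with hAdef
  have hG : G.det ≠ 0 := by
    intro hdet
    obtain ⟨v, hv, hvG⟩ := Matrix.exists_vecMul_eq_zero_iff.mpr hdet
    have hx0 : bM.equivFun.symm v ≠ 0 := fun h => hv (bM.equivFun.symm.map_eq_zero_iff.mp h)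
    apply hx0
    apply hBM
    intro y
    have hbasis : ∀ k, BM (bM.equivFun.symm v) (bM k) = 0 := by
      intro k
      have : BM (bM.equivFun.symm v) (bM k) = ∑ j, v j * G j k := by
        rw [Basis.equivFun_symm_apply, map_sum]
        simp [LinearMap.toMatrix₂_apply, hGdef]
      rw [this]
      have := congrFun hvG k
      simpa [Matrix.vecMul, dotProduct] using this
    have : BM (bM.equivFun.symm v) y =
        BM (bM.equivFun.symm v) (∑ k, bM.repr y k • bM k) := by
      rw [Basis.sum_repr]
    rw [this, map_sum]
    simp only [_root_.map_smul, smul_eq_mul]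
    exact Finset.sum_eq_zero fun k _ => by rw [hbasis k, mul_zero]
  have hA : ∀ i, (A i)ᵀ * H * (A i) = G := by
    intro i
    have hcomp : BN.compl₁₂ (g i) (g i) = BM := by
      ext x y
      exact hg i x y
    rw [hGdef, ← hcomp, LinearMap.toMatrix₂_compl₁₂ bN bN bM bM]
  obtain ⟨i, j, hij, hdet⟩ := aux_trio hp G H A hG hA
  refine ⟨i, j, hij, ?_⟩
  have hsub : A i - A j = LinearMap.toMatrix bM bN (g i - g j) := by
    rw [map_sub]
  obtain ⟨v, hv, hvA⟩ := Matrix.exists_mulVec_eq_zero_iff.mpr hdet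
  refine ⟨bM.equivFun.symm v, ?_, ?_⟩
  · exact fun h => hv (bM.equivFun.symm.map_eq_zero_iff.mp h)
  · have hrepr : (⇑(bM.repr (bM.equivFun.symm v)) : Fin p → ℝ) = v := funext fun k => by
      rw [← Basis.equivFun_apply, bM.equivFun.apply_symm_apply]
    have key := LinearMap.toMatrix_mulVec_repr bM bN (g i - g j) (bM.equivFun.symm v)
    have hze : (⇑(bN.repr ((g i - g j) (bM.equivFun.symm v))) : Fin p → ℝ) = 0 := by
      rw [← key, hrepr, ← hsub, hvA]
    have hz2 : bN.repr ((g i - g j) (bM.equivFun.symm v)) = 0 := by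
      ext k
      simpa using congrFun hze k
    have hz3 : (g i - g j) (bM.equivFun.symm v) = 0 := bN.repr.map_eq_zero_iff.mp hz2
    rw [LinearMap.sub_apply, sub_eq_zero] at hz3
    exact hz3

open Module in
lemma part1 {p : ℕ} (hp : Odd p)
    (f : Fin 3 → (EuclideanSpace ℝ (Fin p) ≃ₗᵢ[ℝ] EuclideanSpace ℝ (Fin p))) :
    ∃ i j : Fin 3, i ≠ j ∧
      ¬ Function.Injective
        ⇑(((f i).toLinearEquiv : EuclideanSpace ℝ (Fin p) →ₗ[ℝ] EuclideanSpace ℝ (Fin p))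
          - ((f j).toLinearEquiv : EuclideanSpace ℝ (Fin p) →ₗ[ℝ] EuclideanSpace ℝ (Fin p))) := by
  set F : Fin 3 → (EuclideanSpace ℝ (Fin p) →ₗ[ℝ] EuclideanSpace ℝ (Fin p)) :=
    fun i => ((f i).toLinearEquiv : EuclideanSpace ℝ (Fin p) →ₗ[ℝ] EuclideanSpace ℝ (Fin p))
    with hFdef
  have hfr : finrank ℝ (EuclideanSpace ℝ (Fin p)) = p := finrank_euclideanSpace_fin
  let b : Basis (Fin p) ℝ (EuclideanSpace ℝ (Fin p)) := Module.finBasisOfFinrankEq ℝ _ hfr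
  let B : LinearMap.BilinForm ℝ (EuclideanSpace ℝ (Fin p)) := innerₗ (EuclideanSpace ℝ (Fin p))
  have hBapp : ∀ x y : EuclideanSpace ℝ (Fin p), B x y = inner ℝ x y := fun x y => rfl
  have hBM : ∀ x : EuclideanSpace ℝ (Fin p), (∀ y, B x y = 0) → x = 0 := by
    intro x hx
    have := hx x
    rw [hBapp] at this
    exact inner_self_eq_zero.mp (by rw [real_inner_comm] at this; exact this)
  have hg : ∀ (i : Fin 3) (x y : EuclideanSpace ℝ (Fin p)), B (F i x) (F i y) = B x y := by
    intro i x y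
    rw [hBapp, hBapp]
    exact (f i).inner_map_map x y
  obtain ⟨i, j, hij, x, hx, hgx⟩ := bridge hp b b B B hBM F hg
  refine ⟨i, j, hij, ?_⟩
  intro hinj
  apply hx
  have h0 : (F i - F j) x = (F i - F j) 0 := by
    rw [map_zero, LinearMap.sub_apply, sub_eq_zero]
    exact hgx
  exact hinj h0

open Module in
lemma exists_graph {p : ℕ}
    (Q : QuadraticForm ℝ (Fin (p + p) → ℝ))
    (S T : Submodule ℝ (Fin (p + p) → ℝ)) (hST : IsCompl S T)
    (hSdim : finrank ℝ S = p)
    (hTneg : ∀ x ∈ T, x ≠ 0 → Q x < 0)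
    (V : Submodule ℝ (Fin (p + p) → ℝ)) (hV : ∀ x ∈ V, Q x = 0)
    (hVd : finrank ℝ V = p) :
    ∃ g : S →ₗ[ℝ] T, ∀ s : S, ((s : Fin (p + p) → ℝ) + (g s : Fin (p + p) → ℝ)) ∈ V := by
  set πS := S.linearProjOfIsCompl T hST with hπS
  set πT := T.linearProjOfIsCompl S hST.symm with hπT
  set φ : V →ₗ[ℝ] S := πS.comp V.subtype with hφ
  have hker : ∀ x : V, φ x = 0 → x = 0 := by
    intro x hx
    have hxT : (x : Fin (p + p) → ℝ) ∈ T := by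
      have hadd : ((S.linearProjOfIsCompl T hST (x : Fin (p + p) → ℝ) : S) : Fin (p + p) → ℝ)
          + (T.linearProjOfIsCompl S hST.symm (x : Fin (p + p) → ℝ) : Fin (p + p) → ℝ) = x :=
        Submodule.projection_add_projection_eq_self hST (x : Fin (p + p) → ℝ)
      have hφx : πS (x : Fin (p + p) → ℝ) = 0 := hx
      rw [← hπS, ← hπT, hφx] at hadd
      simp only [Submodule.coe_zero, zero_add] at hadd
      rw [← hadd]
      exact (πT (x : Fin (p + p) → ℝ)).2
    have hQx : Q (x : Fin (p + p) → ℝ) = 0 := hV _ x.2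
    by_contra hx0
    have : (x : Fin (p + p) → ℝ) ≠ 0 := by
      intro h
      exact hx0 (Subtype.ext h)
    exact absurd hQx (ne_of_lt (hTneg _ hxT this))
  have hinj : Function.Injective φ := by
    intro a b hab
    have h0 : φ (a - b) = 0 := by rw [map_sub, hab, sub_self]
    have := hker _ h0
    rwa [sub_eq_zero] at this
  have hsurj : Function.Surjective φ :=
    (LinearMap.injective_iff_surjective_of_finrank_eq_finrank
      (by rw [hVd, hSdim])).mp hinj
  set e : V ≃ₗ[ℝ] S := LinearEquiv.ofBijective φ ⟨hinj, hsurj⟩ with he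
  refine ⟨(πT.comp V.subtype).comp e.symm.toLinearMap, ?_⟩
  intro s
  have hws : φ (e.symm s) = s := by
    have := e.apply_symm_apply s
    exact this
  have hadd : ((S.linearProjOfIsCompl T hST ((e.symm s : V) : Fin (p + p) → ℝ) : S) : Fin (p + p) → ℝ)
      + (T.linearProjOfIsCompl S hST.symm ((e.symm s : V) : Fin (p + p) → ℝ) : Fin (p + p) → ℝ)
      = ((e.symm s : V) : Fin (p + p) → ℝ) :=
    Submodule.projection_add_projection_eq_self hST ((e.symm s : V) : Fin (p + p) → ℝ)
  rw [← hπS, ← hπT] at hadd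
  have hπSs : πS ((e.symm s : V) : Fin (p + p) → ℝ) = s := hws
  rw [hπSs] at hadd
  have : ((s : Fin (p + p) → ℝ) +
      (((πT.comp V.subtype).comp e.symm.toLinearMap) s : Fin (p + p) → ℝ)) =
      ((e.symm s : V) : Fin (p + p) → ℝ) := by
    rw [← hadd]
    rfl
  rw [this]
  exact (e.symm s).2

set_option maxHeartbeats 1000000 in
open Module in
lemma part2 {p : ℕ} (hp : Odd p)
    (Q : QuadraticForm ℝ (Fin (p + p) → ℝ))
    (S T : Submodule ℝ (Fin (p + p) → ℝ)) (hST : IsCompl S T)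
    (hSdim : finrank ℝ S = p) (hTdim : finrank ℝ T = p)
    (hSpos : ∀ x ∈ S, x ≠ 0 → 0 < Q x)
    (hTneg : ∀ x ∈ T, x ≠ 0 → Q x < 0)
    (hQdec : ∀ x, Q x = Q ((S.linearProjOfIsCompl T hST x : Fin (p + p) → ℝ))
        + Q ((T.linearProjOfIsCompl S hST.symm x : Fin (p + p) → ℝ))) :
    ¬ ∃ V₁ V₂ V₃ : Submodule ℝ (Fin (p + p) → ℝ),
        ((∀ x ∈ V₁, Q x = 0) ∧ finrank ℝ V₁ = p) ∧
        ((∀ x ∈ V₂, Q x = 0) ∧ finrank ℝ V₂ = p) ∧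
        ((∀ x ∈ V₃, Q x = 0) ∧ finrank ℝ V₃ = p) ∧
        V₁ ⊓ V₂ = ⊥ ∧ V₁ ⊓ V₃ = ⊥ ∧ V₂ ⊓ V₃ = ⊥ := by
  rintro ⟨V₁, V₂, V₃, ⟨h1Q, h1d⟩, ⟨h2Q, h2d⟩, ⟨h3Q, h3d⟩, h12, h13, h23⟩
  set V : Fin 3 → Submodule ℝ (Fin (p + p) → ℝ) := ![V₁, V₂, V₃] with hVdef
  have hViso : ∀ i, ∀ x ∈ V i, Q x = 0 := by
    intro i
    fin_cases i
    · exact h1Q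
    · exact h2Q
    · exact h3Q
  have hVbot : ∀ i j : Fin 3, i ≠ j → V i ⊓ V j = ⊥ := by
    intro i j hij
    fin_cases i <;> fin_cases j <;>
      first
        | exact absurd rfl hij
        | exact h12
        | exact h13
        | exact h23
        | (rw [inf_comm]; first | exact h12 | exact h13 | exact h23)
  obtain ⟨g₁, hg₁⟩ := exists_graph Q S T hST hSdim hTneg V₁ h1Q h1d
  obtain ⟨g₂, hg₂⟩ := exists_graph Q S T hST hSdim hTneg V₂ h2Q h2d
  obtain ⟨g₃, hg₃⟩ := exists_graph Q S T hST hSdim hTneg V₃ h3Q h3d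
  set g : Fin 3 → (S →ₗ[ℝ] T) := ![g₁, g₂, g₃] with hgdef
  have hgV : ∀ (i : Fin 3) (s : S),
      ((s : Fin (p + p) → ℝ) + (g i s : Fin (p + p) → ℝ)) ∈ V i := by
    intro i s
    fin_cases i
    · exact hg₁ s
    · exact hg₂ s
    · exact hg₃ s
  have hQg : ∀ (i : Fin 3) (s : S),
      Q (s : Fin (p + p) → ℝ) + Q ((g i s : Fin (p + p) → ℝ)) = 0 := by
    intro i s
    have hmem := hgV i s
    have hiso : Q ((s : Fin (p + p) → ℝ) + (g i s : Fin (p + p) → ℝ)) = 0 :=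
      hViso i _ hmem
    have hdec := hQdec ((s : Fin (p + p) → ℝ) + (g i s : Fin (p + p) → ℝ))
    have e1 : (S.linearProjOfIsCompl T hST)
        ((s : Fin (p + p) → ℝ) + (g i s : Fin (p + p) → ℝ)) = s := by
      rw [map_add, Submodule.linearProjOfIsCompl, Submodule.linearProjOfIsCompl_apply_left hST s,
        Submodule.linearProjOfIsCompl_apply_right hST (g i s), add_zero]
    have e2 : (T.linearProjOfIsCompl S hST.symm)
        ((s : Fin (p + p) → ℝ) + (g i s : Fin (p + p) → ℝ)) = g i s := by
      rw [map_add, Submodule.linearProjOfIsCompl, Submodule.linearProjOfIsCompl_apply_left hST.symm (g i s),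
        Submodule.linearProjOfIsCompl_apply_right hST.symm s, zero_add]
    rw [e1, e2, hiso] at hdec
    linarith
  set BS : S →ₗ[ℝ] S →ₗ[ℝ] ℝ := Q.polarBilin.compl₁₂ S.subtype S.subtype with hBSdef
  set BT : T →ₗ[ℝ] T →ₗ[ℝ] ℝ := -(Q.polarBilin.compl₁₂ T.subtype T.subtype) with hBTdef
  have hBSapp : ∀ x y : S, BS x y =
      Q ((x : Fin (p + p) → ℝ) + y) - Q x - Q y := by
    intro x y
    simp [hBSdef, LinearMap.compl₁₂_apply, QuadraticMap.polarBilin_apply_apply,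
      QuadraticMap.polar]
  have hBTapp : ∀ x y : T, BT x y =
      -(Q ((x : Fin (p + p) → ℝ) + y) - Q x - Q y) := by
    intro x y
    simp [hBTdef, LinearMap.compl₁₂_apply, QuadraticMap.polarBilin_apply_apply,
      QuadraticMap.polar]
  have hBM : ∀ x : S, (∀ y, BS x y = 0) → x = 0 := by
    intro x hx
    have hxx := hx x
    rw [hBSapp] at hxx
    have h2 : Q ((x : Fin (p + p) → ℝ) + x) = Q ((2 : ℝ) • (x : Fin (p + p) → ℝ)) := by
      rw [two_smul]
    rw [h2, QuadraticMap.map_smul] at hxx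
    have hQx : Q (x : Fin (p + p) → ℝ) = 0 := by
      rw [smul_eq_mul] at hxx
      linarith
    by_contra hx0
    have hne : (x : Fin (p + p) → ℝ) ≠ 0 := fun h => hx0 (Subtype.ext h)
    exact absurd hQx (ne_of_gt (hSpos _ x.2 hne))
  have hgb : ∀ (i : Fin 3) (x y : S), BT (g i x) (g i y) = BS x y := by
    intro i x y
    rw [hBSapp, hBTapp]
    have hx := hQg i x
    have hy := hQg i y
    have hxy := hQg i (x + y)
    rw [map_add] at hxy
    have hcoe : (((x + y : S) : Fin (p + p) → ℝ)) = (x : Fin (p + p) → ℝ) + y := rfl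
    have hcoe2 : ((g i x + g i y : T) : Fin (p + p) → ℝ) =
        (g i x : Fin (p + p) → ℝ) + (g i y : Fin (p + p) → ℝ) := rfl
    rw [hcoe, hcoe2] at hxy
    linarith
  have hfinS : finrank ℝ S = p := hSdim
  set bS : Basis (Fin p) ℝ S := Module.finBasisOfFinrankEq ℝ S hfinS with hbS
  set bT : Basis (Fin p) ℝ T := Module.finBasisOfFinrankEq ℝ T hTdim with hbT
  obtain ⟨i, j, hij, s, hs, hgs⟩ := bridge hp bS bT BS BT hBM g hgb
  have hmi := hgV i s
  have hmj := hgV j s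
  rw [← hgs] at hmj
  have hmem : ((s : Fin (p + p) → ℝ) + (g i s : Fin (p + p) → ℝ)) ∈ V i ⊓ V j :=
    ⟨hmi, hmj⟩
  rw [hVbot i j hij] at hmem
  have h0 : ((s : Fin (p + p) → ℝ) + (g i s : Fin (p + p) → ℝ)) = 0 := hmem
  apply hs
  have hπ : (S.linearProjOfIsCompl T hST)
      ((s : Fin (p + p) → ℝ) + (g i s : Fin (p + p) → ℝ)) = s := by
    rw [map_add, Submodule.linearProjOfIsCompl, Submodule.linearProjOfIsCompl_apply_left hST s,
      Submodule.linearProjOfIsCompl_apply_right hST (g i s), add_zero]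
  rw [h0, map_zero] at hπ
  exact hπ.symm


/-- For odd `p`, among any three orthogonal maps of `ℝ^p` two have a
non-injective difference; consequently, in `ℝ^{p,p}` (`p` odd) one cannot find three
pairwise transversal maximal totally isotropic subspaces. -/
theorem no_three_transversal_mtis_odd (p : ℕ) (hp : Odd p) (hp0 : 0 < p)
    (Q : QuadraticForm ℝ (Fin (p + p) → ℝ))
    (S T : Submodule ℝ (Fin (p + p) → ℝ))
    (hST : IsCompl S T)
    (hSdim : finrank ℝ S = p) (hTdim : finrank ℝ T = p)
    (hSpos : ∀ x ∈ S, x ≠ 0 → 0 < Q x)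
    (hTneg : ∀ x ∈ T, x ≠ 0 → Q x < 0)
    (hQdec : ∀ x, Q x = Q ((S.linearProjOfIsCompl T hST x : Fin (p + p) → ℝ))
        + Q ((T.linearProjOfIsCompl S hST.symm x : Fin (p + p) → ℝ))) :
    (∀ f : Fin 3 → (EuclideanSpace ℝ (Fin p) ≃ₗᵢ[ℝ] EuclideanSpace ℝ (Fin p)),
      ∃ i j : Fin 3, i ≠ j ∧
        ¬ Function.Injective
          ⇑(((f i).toLinearEquiv : EuclideanSpace ℝ (Fin p) →ₗ[ℝ] EuclideanSpace ℝ (Fin p))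
            - ((f j).toLinearEquiv : EuclideanSpace ℝ (Fin p) →ₗ[ℝ] EuclideanSpace ℝ (Fin p)))) ∧
    ¬ ∃ V₁ V₂ V₃ : Submodule ℝ (Fin (p + p) → ℝ),
        ((∀ x ∈ V₁, Q x = 0) ∧ finrank ℝ V₁ = p) ∧
        ((∀ x ∈ V₂, Q x = 0) ∧ finrank ℝ V₂ = p) ∧
        ((∀ x ∈ V₃, Q x = 0) ∧ finrank ℝ V₃ = p) ∧
        V₁ ⊓ V₂ = ⊥ ∧ V₁ ⊓ V₃ = ⊥ ∧ V₂ ⊓ V₃ = ⊥ := by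
  exact ⟨fun f => part1 hp f,
    part2 hp Q S T hST hSdim hTdim hSpos hTneg hQdec⟩
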